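/- Let k_a, k_b, β_a, β_b, a, b, c, d, e > 0 with β_b·b/c < 3 and β_b·d/e < 3. Then the function F(x, y, z) = k_a·Q(√(β_a·a·x)) − k_b·Q(√(β_b·b/(c+y))) − k_b·Q(√(β_b·d/(e+z))) is strictly convex on the convex set (0, ∞) × [0, ∞) × [0, ∞), where Q is the Gaussian Q-function. -/

import Mathlib

/-- The Gaussian Q-function: the tail probability of the standard normal distribution. -/
noncomputable def gaussQ (t : ℝ) : ℝ :=
  ∫ u in Set.Ioi t, (1 / Real.sqrt (2 * Real.pi)) * Real.exp (-u ^ 2 / 2)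

open Set

noncomputable def phi (u : ℝ) : ℝ := (1 / Real.sqrt (2 * Real.pi)) * Real.exp (-u ^ 2 / 2)

lemma phi_integrable : MeasureTheory.Integrable phi := by
  have h : phi = fun u => (1 / Real.sqrt (2 * Real.pi)) * Real.exp (-(1/2) * u ^ 2) := by
    funext u; unfold phi; congr 1; ring
  rw [h]
  exact (integrable_exp_neg_mul_sq (by norm_num)).const_mul _

lemma phi_continuous : Continuous phi := by
  unfold phi; fun_prop

lemma phi_pos (u : ℝ) : 0 < phi u := by
  have := Real.sqrt_pos.2 (by positivity : (0:ℝ) < 2 * Real.pi)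
  unfold phi; positivity

lemma gaussQ_eq (t : ℝ) : gaussQ t = gaussQ 0 - ∫ u in (0:ℝ)..t, phi u := by
  have hI := phi_integrable
  have h1 : ∀ s : ℝ, gaussQ s = (∫ u, phi u) - ∫ u in Set.Iic s, phi u := by
    intro s
    have := intervalIntegral.integral_Iic_add_Ioi (b := s) hI.integrableOn hI.integrableOn
    show (∫ u in Set.Ioi s, phi u) = _
    rw [← this]; ring
  rw [h1 t, h1 0, ← intervalIntegral.integral_Iic_sub_Iic hI.integrableOn hI.integrableOn]
  ring

lemma gaussQ_hasDerivAt (t : ℝ) : HasDerivAt gaussQ (-phi t) t := by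
  have h : HasDerivAt (fun u => ∫ x in (0:ℝ)..u, phi x) (phi t) t :=
    intervalIntegral.integral_hasDerivAt_right phi_integrable.intervalIntegrable
      (phi_continuous.aestronglyMeasurable.stronglyMeasurableAtFilter)
      phi_continuous.continuousAt
  have : HasDerivAt (fun u => gaussQ 0 - ∫ x in (0:ℝ)..u, phi x) (-phi t) t :=
    (h.const_sub _)
  exact this.congr_deriv rfl |>.congr_of_eventuallyEq (by filter_upwards with u; rw [gaussQ_eq])

lemma gaussQ_continuous : Continuous gaussQ :=
  continuous_iff_continuousAt.2 fun x => (gaussQ_hasDerivAt x).continuousAt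

lemma sqrtpi_pos : 0 < Real.sqrt (2 * Real.pi) := Real.sqrt_pos.2 (by positivity)

lemma lemA {k m : ℝ} (hk : 0 < k) (hm : 0 < m) :
    StrictConvexOn ℝ (Set.Ioi (0:ℝ)) (fun x : ℝ => k * gaussQ (Real.sqrt (m * x))) := by
  set C := 1 / Real.sqrt (2 * Real.pi) with hC
  have hCpos : 0 < C := by rw [hC]; positivity
  set D1 : ℝ → ℝ := fun x => -(k * m / 2) * (C * Real.exp (-(m*x)/2) * (Real.sqrt (m*x))⁻¹)
    with hD1
  -- derivative of inner sqrt
  have hr : ∀ x : ℝ, 0 < x →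
      HasDerivAt (fun x => Real.sqrt (m * x)) (m / (2 * Real.sqrt (m*x))) x := by
    intro x hx
    have hmx : m * x ≠ 0 := by positivity
    have := (Real.hasDerivAt_sqrt hmx).comp x ((hasDerivAt_id x).const_mul m)
    refine this.congr_deriv ?_
    field_simp
  -- first derivative
  have hf : ∀ x : ℝ, 0 < x →
      HasDerivAt (fun x : ℝ => k * gaussQ (Real.sqrt (m * x))) (D1 x) x := by
    intro x hx
    have h := ((gaussQ_hasDerivAt (Real.sqrt (m*x))).comp x (hr x hx)).const_mul k
    refine h.congr_deriv ?_
    have hmx : (0:ℝ) ≤ m * x := by positivity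
    have hne : Real.sqrt (m*x) ≠ 0 := (Real.sqrt_pos.2 (by positivity)).ne'
    rw [hD1]
    simp only [phi, Real.sq_sqrt hmx]
    rw [hC]
    field_simp
  -- second derivative
  have hf2 : ∀ x : ℝ, 0 < x → ∃ E : ℝ, HasDerivAt D1 E x ∧ 0 < E := by
    intro x hx
    have hmx : (0:ℝ) < m * x := by positivity
    have ht : 0 < Real.sqrt (m*x) := Real.sqrt_pos.2 hmx
    have ht2 : Real.sqrt (m*x) ^ 2 = m * x := Real.sq_sqrt hmx.le
    have h_exp : HasDerivAt (fun x : ℝ => Real.exp (-(m*x)/2))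
        (Real.exp (-(m*x)/2) * (-m/2)) x := by
      have := (((hasDerivAt_id x).const_mul m).neg.div_const 2).exp
      simpa using this
    have h_inv : HasDerivAt (fun x : ℝ => (Real.sqrt (m*x))⁻¹)
        (-(m / (2 * Real.sqrt (m*x))) / (Real.sqrt (m*x))^2) x := (hr x hx).inv ht.ne'
    have h := ((h_exp.const_mul C).mul h_inv).const_mul (-(k * m / 2))
    refine ⟨_, h, ?_⟩
    set t := Real.sqrt (m*x)
    have key : -(k * m / 2) *
        (C * (Real.exp (-(m * x) / 2) * (-m / 2)) * t⁻¹ +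
          C * Real.exp (-(m*x)/2) * (-(m / (2 * t)) / t ^ 2))
        = (k * m / 2) * (C * Real.exp (-(m*x)/2)) * (m/(2*t) + m/(2*t^3)) := by
      field_simp
      ring
    rw [key]
    positivity
  apply strictConvexOn_of_deriv2_pos (convex_Ioi 0)
  · exact (continuous_const.mul (gaussQ_continuous.comp
      (Real.continuous_sqrt.comp (continuous_const.mul continuous_id)))).continuousOn
  · intro x hx
    rw [interior_Ioi] at hx
    obtain ⟨E, hE, hEpos⟩ := hf2 x hx
    have hev : deriv (fun x : ℝ => k * gaussQ (Real.sqrt (m * x))) =ᶠ[nhds x] D1 := by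
      filter_upwards [isOpen_Ioi.mem_nhds hx] with y hy
      exact (hf y hy).deriv
    simp only [Function.iterate_succ, Function.iterate_zero, Function.comp_apply, id]
    rw [hev.deriv_eq]
    exact hE.deriv ▸ hEpos

lemma lemB {k s c : ℝ} (hk : 0 < k) (hs : 0 < s) (hc : 0 < c) (h3 : s / c < 3) :
    StrictConvexOn ℝ (Set.Ici (0:ℝ)) (fun y : ℝ => -(k * gaussQ (Real.sqrt (s / (c + y))))) := by
  set C := 1 / Real.sqrt (2 * Real.pi) with hC
  have hCpos : 0 < C := by rw [hC]; have := Real.sqrt_pos.2 (by positivity : (0:ℝ) < 2*Real.pi); positivity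
  set D1 : ℝ → ℝ := fun y =>
    -(k * s / 2) * (C * Real.exp (-(s/(c+y))/2) * ((Real.sqrt (s/(c+y)))⁻¹ * (((c+y)^2)⁻¹)))
    with hD1
  -- derivative of inner quotient
  have hq : ∀ y : ℝ, 0 < y → HasDerivAt (fun y : ℝ => s / (c + y)) (-s / (c+y)^2) y := by
    intro y hy
    have hw : c + y ≠ 0 := by positivity
    have := (((hasDerivAt_id y).const_add c).inv hw).const_mul s
    refine this.congr_deriv ?_
    simp only [id]
    field_simp
  -- derivative of inner sqrt
  have hr : ∀ y : ℝ, 0 < y →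
      HasDerivAt (fun y : ℝ => Real.sqrt (s / (c + y)))
        (1 / (2 * Real.sqrt (s/(c+y))) * (-s / (c+y)^2)) y := by
    intro y hy
    have hu : s / (c + y) ≠ 0 := by positivity
    exact (Real.hasDerivAt_sqrt hu).comp y (hq y hy)
  -- first derivative
  have hf : ∀ y : ℝ, 0 < y →
      HasDerivAt (fun y : ℝ => -(k * gaussQ (Real.sqrt (s / (c + y))))) (D1 y) y := by
    intro y hy
    have hw : (0:ℝ) < c + y := by positivity
    have hu : (0:ℝ) < s / (c + y) := by positivity
    have h := (((gaussQ_hasDerivAt (Real.sqrt (s/(c+y)))).comp y (hr y hy)).const_mul k).neg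
    refine h.congr_deriv ?_
    have ht : (0:ℝ) < Real.sqrt (s/(c+y)) := Real.sqrt_pos.2 hu
    rw [hD1]
    simp only [phi, Real.sq_sqrt hu.le]
    rw [hC]
    field_simp
  -- second derivative positive
  have hf2 : ∀ y : ℝ, 0 < y → ∃ E : ℝ, HasDerivAt D1 E y ∧ 0 < E := by
    intro y hy
    have hw : (0:ℝ) < c + y := by positivity
    have hu : (0:ℝ) < s / (c + y) := by positivity
    have ht : (0:ℝ) < Real.sqrt (s/(c+y)) := Real.sqrt_pos.2 hu
    have ht2 : Real.sqrt (s/(c+y)) ^ 2 = s/(c+y) := Real.sq_sqrt hu.le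
    have h_exp : HasDerivAt (fun y : ℝ => Real.exp (-(s/(c+y))/2))
        (Real.exp (-(s/(c+y))/2) * (-(-s / (c+y)^2)/2)) y := ((hq y hy).neg.div_const 2).exp
    have h_invs : HasDerivAt (fun y : ℝ => (Real.sqrt (s/(c+y)))⁻¹)
        (-(1 / (2 * Real.sqrt (s/(c+y))) * (-s / (c+y)^2)) / (Real.sqrt (s/(c+y)))^2) y :=
      (hr y hy).inv ht.ne'
    have h_invw : HasDerivAt (fun y : ℝ => (((c+y)^2)⁻¹))
        (-(2 * (c+y)^1 * 1) / ((c+y)^2)^2) y := by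
      exact (((hasDerivAt_id y).const_add c).pow 2).inv (pow_ne_zero 2 hw.ne')
    have h := (((h_exp.const_mul C)).mul (h_invs.mul h_invw)).const_mul (-(k*s/2))
    refine ⟨_, h, ?_⟩
    set t := Real.sqrt (s/(c+y)) with hts
    have hsub : s = t^2 * (c + y) := by rw [ht2]; field_simp
    have h3t : 0 < 3 - t^2 := by
      have hle : s/(c+y) ≤ s/c := by gcongr <;> linarith
      rw [ht2]; linarith
    have key : -(k*s/2) *
        (C * (Real.exp (-(s/(c+y))/2) * (-(-s / (c+y)^2)/2)) * (t⁻¹ * ((c+y)^2)⁻¹) +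
          C * Real.exp (-(s/(c+y))/2) *
            (-(1 / (2 * t) * (-s / (c+y)^2)) / t^2 * ((c+y)^2)⁻¹ +
              t⁻¹ * (-(2 * (c+y)^1 * 1) / ((c+y)^2)^2)))
        = (k/4) * (C * Real.exp (-(s/(c+y))/2)) * (t * (3 - t^2) / (c+y)^2) := by
      rw [hsub]
      field_simp
      ring
    simp only [Pi.mul_apply]
    rw [key]
    have he : 0 < Real.exp (-(s/(c+y))/2) := Real.exp_pos _
    apply mul_pos (by positivity)
    exact div_pos (mul_pos ht h3t) (by positivity)
  apply strictConvexOn_of_deriv2_pos (convex_Ici 0)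
  · have hcont : ContinuousOn (fun y : ℝ => s / (c + y)) (Ici 0) := by
      apply continuousOn_const.div (by fun_prop)
      intro y hy
      have : (0:ℝ) ≤ y := hy
      positivity
    exact ((continuous_const.mul gaussQ_continuous).comp_continuousOn
      (Real.continuous_sqrt.comp_continuousOn hcont)).neg
  · intro x hx
    rw [interior_Ici] at hx
    obtain ⟨E, hE, hEpos⟩ := hf2 x hx
    have hev : deriv (fun y : ℝ => -(k * gaussQ (Real.sqrt (s / (c + y))))) =ᶠ[nhds x] D1 := by
      filter_upwards [isOpen_Ioi.mem_nhds hx] with z hz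
      exact (hf z hz).deriv
    simp only [Function.iterate_succ, Function.iterate_zero, Function.comp_apply, id]
    rw [hev.deriv_eq]
    exact hE.deriv ▸ hEpos

lemma add3 {f g h : ℝ → ℝ} {S T U : Set ℝ}
    (hf : StrictConvexOn ℝ S f) (hg : StrictConvexOn ℝ T g) (hh : StrictConvexOn ℝ U h) :
    StrictConvexOn ℝ (S ×ˢ T ×ˢ U) (fun p : ℝ × ℝ × ℝ => f p.1 + g p.2.1 + h p.2.2) := by
  constructor
  · exact hf.1.prod (hg.1.prod hh.1)
  · rintro ⟨x1, y1, z1⟩ ⟨hx1, hy1, hz1⟩ ⟨x2, y2, z2⟩ ⟨hx2, hy2, hz2⟩ hne a b hA hB hab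
    simp only [Prod.smul_mk, Prod.mk_add_mk, smul_eq_mul]
    have key : ∀ (F : ℝ → ℝ) (V : Set ℝ) (u v : ℝ), StrictConvexOn ℝ V F → u ∈ V → v ∈ V →
        F (a * u + b * v) ≤ a * F u + b * F v ∧
          (u ≠ v → F (a * u + b * v) < a * F u + b * F v) := by
      intro F V u v hF hu hv
      constructor
      · exact hF.convexOn.2 hu hv hA.le hB.le hab
      · intro huv; exact hF.2 hu hv huv hA hB hab
    obtain ⟨h1le, h1lt⟩ := key f S x1 x2 hf hx1 hx2
    obtain ⟨h2le, h2lt⟩ := key g T y1 y2 hg hy1 hy2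
    obtain ⟨h3le, h3lt⟩ := key h U z1 z2 hh hz1 hz2
    have hcase : x1 ≠ x2 ∨ y1 ≠ y2 ∨ z1 ≠ z2 := by
      by_contra hcon
      push_neg at hcon
      exact hne (by simp [hcon.1, hcon.2.1, hcon.2.2])
    rcases hcase with hd | hd | hd
    · have := h1lt hd; linarith
    · have := h2lt hd; linarith
    · have := h3lt hd; linarith

/-- Strict convexity of the single-agent objective in the power allocation game:
`F(x, y, z) = k_a·Q(√(β_a a x)) − k_b·Q(√(β_b b/(c+y))) − k_b·Q(√(β_b d/(e+z)))`
is strictly convex on `(0, ∞) × [0, ∞) × [0, ∞)` provided `β_b·b/c < 3` and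
`β_b·d/e < 3`. -/
theorem strictConvexOn_team_objective (ka kb βa βb a b c d e : ℝ)
    (hka : 0 < ka) (hkb : 0 < kb) (hβa : 0 < βa) (hβb : 0 < βb)
    (ha : 0 < a) (hb : 0 < b) (hc : 0 < c) (hd : 0 < d) (he : 0 < e)
    (h1 : βb * (b / c) < 3) (h2 : βb * (d / e) < 3) :
    StrictConvexOn ℝ (Set.Ioi (0 : ℝ) ×ˢ Set.Ici (0 : ℝ) ×ˢ Set.Ici (0 : ℝ))
      (fun p : ℝ × ℝ × ℝ =>
        ka * gaussQ (Real.sqrt (βa * a * p.1))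
          - kb * gaussQ (Real.sqrt (βb * (b / (c + p.2.1))))
          - kb * gaussQ (Real.sqrt (βb * (d / (e + p.2.2))))) := by
  have hA := lemA (k := ka) (m := βa * a) hka (by positivity)
  have hB1 := lemB (k := kb) (s := βb * b) (c := c) hkb (by positivity) hc
    (by rw [mul_div_assoc]; exact h1)
  have hB2 := lemB (k := kb) (s := βb * d) (c := e) hkb (by positivity) he
    (by rw [mul_div_assoc]; exact h2)
  have hsum := add3 hA hB1 hB2
  have hEq : (fun p : ℝ × ℝ × ℝ =>
        ka * gaussQ (Real.sqrt (βa * a * p.1))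
          - kb * gaussQ (Real.sqrt (βb * (b / (c + p.2.1))))
          - kb * gaussQ (Real.sqrt (βb * (d / (e + p.2.2)))))
      = (fun p : ℝ × ℝ × ℝ =>
        ka * gaussQ (Real.sqrt (βa * a * p.1))
          + -(kb * gaussQ (Real.sqrt (βb * b / (c + p.2.1))))
          + -(kb * gaussQ (Real.sqrt (βb * d / (e + p.2.2))))) := by
    funext p
    rw [mul_div_assoc, mul_div_assoc]
    ring
  rw [hEq]
  exact hsum
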